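/- Let Z be a random variable on a discrete probability space with finite range 𝒵, let ρ be a random state on a finite-dimensional complex Hilbert space defined on the same probability space, and let F be a random function with domain 𝒵 and finite range which is independent of the pair (Z, ρ). Then d(F(Z) | {F} ⊗ ρ) = E_F[ d(F(Z) | ρ) ], where for each fixed function f the quantity d(f(Z) | ρ) is the non-uniformity of f(Z) given ρ, and the expectation is over the distribution of F. -/

import Mathlib

open Matrix
open scoped Kronecker ComplexOrder

noncomputable section

/-- A density operator: positive semidefinite with trace one. -/
def IsDensityOp {d : Type*} [Fintype d] [DecidableEq d] (ρ : Matrix d d ℂ) : Prop :=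
  ρ.PosSemidef ∧ ρ.trace = 1

/-- The operator absolute value `|A| = (A Aᴴ)^(1/2)`. -/
noncomputable def matAbs {d : Type*} [Fintype d] [DecidableEq d] (A : Matrix d d ℂ) :
    Matrix d d ℂ :=
  ((Matrix.posSemidef_self_mul_conjTranspose A).1.eigenvectorUnitary : Matrix d d ℂ) *
    Matrix.diagonal ((↑) ∘ Real.sqrt ∘ (Matrix.posSemidef_self_mul_conjTranspose A).1.eigenvalues) *
    (star (Matrix.posSemidef_self_mul_conjTranspose A).1.eigenvectorUnitary : Matrix d d ℂ)

/-- Trace distance `δ(ρ,σ) = (1/2) tr|ρ-σ|`. -/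
noncomputable def traceDist {d : Type*} [Fintype d] [DecidableEq d]
    (ρ σ : Matrix d d ℂ) : ℝ :=
  (1 / 2) * (matAbs (ρ - σ)).trace.re

/-- Squared Hilbert-Schmidt distance `Δ(ρ,σ) = tr((ρ-σ)²)`. -/
noncomputable def hsDistSq {d : Type*} [Fintype d] [DecidableEq d]
    (ρ σ : Matrix d d ℂ) : ℝ :=
  ((ρ - σ) * (ρ - σ)).trace.re

/-- Expectation of a random state. -/
noncomputable def expState {Ω d : Type*} [Fintype d]
    (P : Ω → ℝ) (ρ : Ω → Matrix d d ℂ) : Matrix d d ℂ :=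
  ∑' ω, P ω • ρ ω

/-- Probability of an event. -/
noncomputable def prEvent {Ω : Type*} (P : Ω → ℝ) (E : Set Ω) : ℝ :=
  ∑' ω, E.indicator P ω

/-- Conditional expectation `[ρ | E]` of a random state given an event. -/
noncomputable def condExpState {Ω d : Type*} [Fintype d]
    (P : Ω → ℝ) (ρ : Ω → Matrix d d ℂ) (E : Set Ω) : Matrix d d ℂ :=
  (prEvent P E)⁻¹ • ∑' ω, E.indicator (fun ω => P ω • ρ ω) ω

/-- The classical state `|x⟩⟨x|`. -/
noncomputable def classicalState {𝒳 : Type*} [Fintype 𝒳] [DecidableEq 𝒳] (x : 𝒳) :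
    Matrix 𝒳 𝒳 ℂ :=
  Matrix.single x x 1

/-- The fully mixed state on `𝒳`. -/
noncomputable def uniformState (𝒳 : Type*) [Fintype 𝒳] [DecidableEq 𝒳] : Matrix 𝒳 𝒳 ℂ :=
  (Fintype.card 𝒳 : ℂ)⁻¹ • (1 : Matrix 𝒳 𝒳 ℂ)

/-- Non-uniformity `d(X|ρ) = δ([{X} ⊗ ρ], [{U}] ⊗ [ρ])`. -/
noncomputable def nonUnif {Ω 𝒳 d : Type*} [Fintype 𝒳] [DecidableEq 𝒳]
    [Fintype d] [DecidableEq d]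
    (P : Ω → ℝ) (X : Ω → 𝒳) (ρ : Ω → Matrix d d ℂ) : ℝ :=
  traceDist (expState P (fun ω => classicalState (X ω) ⊗ₖ ρ ω))
    (uniformState 𝒳 ⊗ₖ expState P ρ)

/-- `D(X|ρ) = Δ([{X} ⊗ ρ], [{U}] ⊗ [ρ])`. -/
noncomputable def DNonUnif {Ω 𝒳 d : Type*} [Fintype 𝒳] [DecidableEq 𝒳]
    [Fintype d] [DecidableEq d]
    (P : Ω → ℝ) (X : Ω → 𝒳) (ρ : Ω → Matrix d d ℂ) : ℝ :=
  hsDistSq (expState P (fun ω => classicalState (X ω) ⊗ₖ ρ ω))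
    (uniformState 𝒳 ⊗ₖ expState P ρ)

/-- Rényi entropy of order 0: `log₂ rank ρ`. -/
noncomputable def renyiS0 {d : Type*} [Fintype d] [DecidableEq d] (ρ : Matrix d d ℂ) : ℝ :=
  Real.logb 2 (ρ.rank)

/-- Rényi entropy of order 2: `-log₂ tr(ρ²)`. -/
noncomputable def renyiS2 {d : Type*} [Fintype d] [DecidableEq d] (ρ : Matrix d d ℂ) : ℝ :=
  -Real.logb 2 ((ρ * ρ).trace.re)

/-- Maximal eigenvalue of a Hermitian matrix. -/
noncomputable def lambdaMax {d : Type*} [Fintype d] [DecidableEq d] (ρ : Matrix d d ℂ) : ℝ :=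
  if h : ρ.IsHermitian then ⨆ i, h.eigenvalues i else 0

/-- Von Neumann entropy `S(ρ) = -tr(ρ log₂ ρ)` (in bits). -/
noncomputable def vnEntropy {d : Type*} [Fintype d] [DecidableEq d] (ρ : Matrix d d ℂ) : ℝ :=
  if h : ρ.IsHermitian then -∑ i, h.eigenvalues i * Real.logb 2 (h.eigenvalues i) else 0

/-- Smooth Rényi entropy of order 0. -/
noncomputable def smoothS0 {d : Type*} [Fintype d] [DecidableEq d]
    (ε : ℝ) (ρ : Matrix d d ℂ) : ℝ :=
  sInf {x : ℝ | ∃ σ : Matrix d d ℂ,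
    IsDensityOp σ ∧ traceDist ρ σ ≤ ε ∧ x = Real.logb 2 (σ.rank)}

/-- Smooth Rényi entropy of order ∞. -/
noncomputable def smoothSinf {d : Type*} [Fintype d] [DecidableEq d]
    (ε : ℝ) (ρ : Matrix d d ℂ) : ℝ :=
  sSup {x : ℝ | ∃ σ : Matrix d d ℂ,
    IsDensityOp σ ∧ traceDist ρ σ ≤ ε ∧ x = -Real.logb 2 (lambdaMax σ)}


namespace Stmt5Aux

open scoped MatrixOrder

/-! ### Block embedding -/

section blocks

variable {𝒮 T d : Type*} [Fintype 𝒮] [DecidableEq 𝒮] [Fintype T] [DecidableEq T]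
  [Fintype d] [DecidableEq d]

def emb (g : T) : Matrix (𝒮 × d) (𝒮 × (T × d)) ℂ :=
  Matrix.of fun a p => if p.2.1 = g ∧ a = (p.1, p.2.2) then 1 else 0

def embedBlk (g : T) (A : Matrix (𝒮 × d) (𝒮 × d) ℂ) :
    Matrix (𝒮 × (T × d)) (𝒮 × (T × d)) ℂ :=
  Matrix.of fun p q => if p.2.1 = g ∧ q.2.1 = g then A (p.1, p.2.2) (q.1, q.2.2) else 0

lemma embedBlk_apply (g : T) (A : Matrix (𝒮 × d) (𝒮 × d) ℂ) (p q) :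
    embedBlk g A p q = if p.2.1 = g ∧ q.2.1 = g then A (p.1, p.2.2) (q.1, q.2.2) else 0 :=
  rfl

lemma embedBlk_eq (g : T) (A : Matrix (𝒮 × d) (𝒮 × d) ℂ) :
    embedBlk g A = (emb g : Matrix (𝒮 × d) (𝒮 × (T × d)) ℂ)ᴴ * A * (emb g : Matrix (𝒮 × d) (𝒮 × (T × d)) ℂ) := by
  ext ⟨s, k, j⟩ ⟨s', k', j'⟩
  simp [emb, embedBlk, Matrix.mul_apply, Fintype.sum_prod_type, ite_and, mul_ite, ite_mul,
    Finset.sum_ite_eq, Finset.sum_ite_eq', Prod.ext_iff, eq_comm,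
    apply_ite (starRingEnd ℂ)]
  by_cases h1 : g = k <;> by_cases h2 : g = k' <;> simp [h1, h2]

lemma emb_mul_emb_conjTranspose (g h : T) :
    (emb g : Matrix (𝒮 × d) (𝒮 × (T × d)) ℂ) * (emb h : Matrix (𝒮 × d) (𝒮 × (T × d)) ℂ)ᴴ
      = (if g = h then 1 else 0 : Matrix (𝒮 × d) (𝒮 × d) ℂ) := by
  by_cases hgh : g = h <;>
    ext ⟨s, j⟩ ⟨s', j'⟩ <;>
    simp [emb, Matrix.mul_apply, Fintype.sum_prod_type, ite_and, mul_ite, ite_mul,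
      Finset.sum_ite_eq, Finset.sum_ite_eq', one_apply, Prod.ext_iff, hgh, eq_comm,
      apply_ite (starRingEnd ℂ)]

lemma embedBlk_mul (g h : T) (A B : Matrix (𝒮 × d) (𝒮 × d) ℂ) :
    embedBlk g A * embedBlk h B = if g = h then embedBlk g (A * B) else 0 := by
  by_cases hgh : g = h
  · subst hgh
    rw [if_pos rfl]
    ext ⟨s, k, j⟩ ⟨s', k', j'⟩
    simp only [Matrix.mul_apply, embedBlk_apply]
    by_cases h1 : k = g <;> by_cases h2 : k' = g <;>
      simp [h1, h2, ite_and, mul_ite, ite_mul, Fintype.sum_prod_type,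
        Finset.sum_ite_eq, Finset.sum_ite_eq']
  · rw [if_neg hgh]
    ext ⟨s, k, j⟩ ⟨s', k', j'⟩
    simp only [Matrix.mul_apply, embedBlk_apply, Matrix.zero_apply]
    by_cases h1 : k = g <;> by_cases h2 : k' = h <;>
      simp [h1, h2, ite_and, mul_ite, ite_mul, Fintype.sum_prod_type,
        Finset.sum_ite_eq, Finset.sum_ite_eq', hgh, fun x => Ne.symm hgh]
    all_goals exact fun h3 => absurd h3.symm hgh

lemma embedBlk_conjTranspose (g : T) (A : Matrix (𝒮 × d) (𝒮 × d) ℂ) :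
    (embedBlk g A)ᴴ = embedBlk g Aᴴ := by
  ext ⟨s, k, j⟩ ⟨s', k', j'⟩
  simp only [conjTranspose_apply, embedBlk_apply]
  by_cases h1 : k = g <;> by_cases h2 : k' = g <;> simp [h1, h2, and_comm]

lemma embedBlk_posSemidef (g : T) {A : Matrix (𝒮 × d) (𝒮 × d) ℂ} (hA : A.PosSemidef) :
    (embedBlk g A).PosSemidef := by
  rw [embedBlk_eq]
  exact hA.conjTranspose_mul_mul_same (emb g)

lemma embedBlk_trace (g : T) (A : Matrix (𝒮 × d) (𝒮 × d) ℂ) :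
    (embedBlk g A).trace = A.trace := by
  rw [embedBlk_eq, Matrix.trace_mul_cycle, emb_mul_emb_conjTranspose]
  simp

lemma embedBlk_sub (g : T) (A B : Matrix (𝒮 × d) (𝒮 × d) ℂ) :
    embedBlk g (A - B) = embedBlk g A - embedBlk g B := by
  ext p q
  simp only [Matrix.sub_apply, embedBlk_apply]
  split_ifs <;> simp

lemma embedBlk_smul (g : T) (c : ℝ) (A : Matrix (𝒮 × d) (𝒮 × d) ℂ) :
    embedBlk g (c • A) = c • embedBlk g A := by
  ext p q
  simp only [Matrix.smul_apply, embedBlk_apply]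
  split_ifs <;> simp

omit [DecidableEq 𝒮] [DecidableEq T] [DecidableEq d] in
lemma posSemidef_sum {ι : Type*} (s : Finset ι) (f : ι → Matrix (𝒮 × (T × d)) (𝒮 × (T × d)) ℂ)
    (h : ∀ i ∈ s, (f i).PosSemidef) : (∑ i ∈ s, f i).PosSemidef := by
  classical
  induction s using Finset.induction with
  | empty => simpa using Matrix.PosSemidef.zero
  | insert _ _ hni ih =>
    rename_i a s'
    rw [Finset.sum_insert hni]
    exact (h a (Finset.mem_insert_self a s')).add
      (ih fun i hi => h i (Finset.mem_insert_of_mem hi))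

lemma matAbs_eq_sqrt {n : Type*} [Fintype n] [DecidableEq n] (A : Matrix n n ℂ) :
    matAbs A = CFC.sqrt (A * Aᴴ) := by
  have hA := Matrix.posSemidef_self_mul_conjTranspose A
  rw [CFC.sqrt_eq_cfc, cfc_nnreal_eq_real _ (A * Aᴴ), hA.1.cfc_eq]
  simp only [matAbs, IsHermitian.cfc, Unitary.conjStarAlgAut_apply]
  congr 3
  funext i
  simp [Real.coe_toNNReal _ (hA.eigenvalues_nonneg i), max_eq_left (hA.eigenvalues_nonneg i)]

lemma matAbs_unique {n : Type*} [Fintype n] [DecidableEq n] {A B : Matrix n n ℂ}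
    (hB : B.PosSemidef) (h : B ^ 2 = A * Aᴴ) : matAbs A = B := by
  rw [matAbs_eq_sqrt]
  exact CFC.sqrt_unique (by rw [← sq]; exact h) hB.nonneg

lemma matAbs_sq {n : Type*} [Fintype n] [DecidableEq n] (A : Matrix n n ℂ) :
    matAbs A ^ 2 = A * Aᴴ :=
  by rw [matAbs_eq_sqrt]; exact CFC.sq_sqrt _ (Matrix.posSemidef_self_mul_conjTranspose A).nonneg

lemma matAbs_posSemidef {n : Type*} [Fintype n] [DecidableEq n] (A : Matrix n n ℂ) :
    (matAbs A).PosSemidef :=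
  by rw [matAbs_eq_sqrt]; exact (CFC.sqrt_nonneg _).posSemidef

lemma posSemidef_real_smul {n : Type*} [Fintype n] {A : Matrix n n ℂ}
    (hA : A.PosSemidef) {c : ℝ} (hc : 0 ≤ c) : (c • A).PosSemidef := by
  exact hA.smul hc

lemma matAbs_blockSum (C : T → Matrix (𝒮 × d) (𝒮 × d) ℂ) :
    matAbs (∑ g : T, embedBlk g (C g)) = ∑ g : T, embedBlk g (matAbs (C g)) := by
  have hPSD : (∑ g : T, embedBlk g (matAbs (C g))).PosSemidef :=
    posSemidef_sum _ _ fun g _ => embedBlk_posSemidef g (matAbs_posSemidef (C g))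
  have hsq : (∑ g : T, embedBlk g (matAbs (C g))) ^ 2
      = (∑ g : T, embedBlk g (C g)) * (∑ g : T, embedBlk g (C g))ᴴ := by
    rw [sq, Finset.sum_mul_sum, conjTranspose_sum, Finset.sum_mul_sum]
    refine Finset.sum_congr rfl fun g _ => Finset.sum_congr rfl fun h _ => ?_
    rw [embedBlk_conjTranspose, embedBlk_mul, embedBlk_mul]
    by_cases hgh : g = h
    · subst hgh
      simp [← matAbs_sq, sq]
    · simp [hgh]
  exact matAbs_unique hPSD hsq

lemma matAbs_smul {n : Type*} [Fintype n] [DecidableEq n] {c : ℝ} (hc : 0 ≤ c)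
    (A : Matrix n n ℂ) : matAbs (c • A) = c • matAbs A := by
  have hPSD : (c • matAbs A).PosSemidef := posSemidef_real_smul (matAbs_posSemidef A) hc
  have hsq : (c • matAbs A) ^ 2 = (c • A) * (c • A)ᴴ := by
    rw [conjTranspose_smul, star_trivial, Matrix.smul_mul, Matrix.mul_smul, smul_smul, sq,
      Matrix.smul_mul, Matrix.mul_smul, smul_smul, ← matAbs_sq A, sq]
  exact matAbs_unique hPSD hsq

end blocks

/-! ### Summability helpers -/

section summable

lemma summable_of_tsum_eq_one {Ω : Type*} {P : Ω → ℝ} (h1 : ∑' ω, P ω = 1) :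
    Summable P := by
  by_contra h
  rw [tsum_eq_zero_of_not_summable h] at h1
  norm_num at h1

lemma entry_norm_le_one {n : Type*} [Fintype n] [DecidableEq n] {ρ : Matrix n n ℂ}
    (h : IsDensityOp ρ) (i j : n) : ‖ρ i j‖ ≤ 1 := by
  obtain ⟨B, hB⟩ := CStarAlgebra.nonneg_iff_eq_star_mul_self.mp h.1.nonneg
  set v : n → EuclideanSpace ℂ n := fun a => (WithLp.equiv 2 _).symm (fun k => B k a) with hv_def
  have hv : ∀ a b, ρ a b = inner ℂ (v a) (v b) := by
    intro a b
    rw [EuclideanSpace.inner_eq_star_dotProduct]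
    simp [hB, Matrix.mul_apply, dotProduct, conjTranspose_apply, hv_def, mul_comm]
  have hnorm : ∀ a, ‖v a‖ ^ 2 = (ρ a a).re := by
    intro a
    rw [← @inner_self_eq_norm_sq ℂ, hv a a]; rfl
  have tr : ∑ a, (ρ a a).re = 1 := by
    have h2 := h.2
    rw [Matrix.trace] at h2
    have := congrArg Complex.re h2
    simpa [Complex.re_sum, Matrix.diag] using this
  have hle : ∀ a, (ρ a a).re ≤ 1 := by
    intro a
    rw [← tr]
    refine Finset.single_le_sum (f := fun b => (ρ b b).re) (fun b _ => ?_) (Finset.mem_univ a)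
    rw [← hnorm b]; positivity
  have h1 : ‖v i‖ ^ 2 ≤ 1 := by rw [hnorm]; exact hle i
  have h2 : ‖v j‖ ^ 2 ≤ 1 := by rw [hnorm]; exact hle j
  calc ‖ρ i j‖ = ‖(inner ℂ (v i) (v j) : ℂ)‖ := by rw [hv i j]
    _ ≤ ‖v i‖ * ‖v j‖ := norm_inner_le_norm _ _
    _ ≤ 1 := by nlinarith [norm_nonneg (v i), norm_nonneg (v j)]

lemma kron_cs_entry_bound {𝒳 n : Type*} [Fintype 𝒳] [DecidableEq 𝒳] [Fintype n]
    {R : Matrix n n ℂ} (hR : ∀ i j, ‖R i j‖ ≤ 1) (x : 𝒳) (i j : 𝒳 × n) :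
    ‖(classicalState x ⊗ₖ R) i j‖ ≤ 1 := by
  obtain ⟨a, b⟩ := i; obtain ⟨c, e⟩ := j
  rw [Matrix.kronecker_apply]
  simp only [classicalState, Matrix.single, Matrix.of_apply]
  split_ifs with h
  · simpa using hR b e
  · simp

lemma matrix_summable {ι n m : Type*} [Fintype n] [Fintype m] {f : ι → Matrix n m ℂ}
    (h : ∀ i j, Summable fun k => f k i j) : Summable f :=
  Pi.summable.2 fun i => Pi.summable.2 fun j => h i j

lemma matrix_tsum_apply {ι n m : Type*} [Fintype n] [Fintype m] {f : ι → Matrix n m ℂ}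
    (h : ∀ i j, Summable fun k => f k i j) (i : n) (j : m) :
    (∑' k, f k) i j = ∑' k, f k i j := by
  have hs : Summable f := matrix_summable h
  rw [show (∑' k, f k) i = ∑' k, f k i from tsum_apply hs,
    tsum_apply (Pi.summable.2 (h i))]

lemma summable_mul_of_norm_le_one {Ω : Type*} {P : Ω → ℝ} (hP : Summable P)
    (hP0 : ∀ ω, 0 ≤ P ω) {f : Ω → ℂ} (hf : ∀ ω, ‖f ω‖ ≤ 1) :
    Summable fun ω => (P ω : ℂ) * f ω := by
  refine Summable.of_norm_bounded (g := P) hP fun ω => ?_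
  rw [norm_mul, Complex.norm_real, Real.norm_eq_abs, abs_of_nonneg (hP0 ω)]
  calc P ω * ‖f ω‖ ≤ P ω * 1 := mul_le_mul_of_nonneg_left (hf ω) (hP0 ω)
    _ = P ω := mul_one _

lemma expState_apply {Ω n : Type*} [Fintype n] (P : Ω → ℝ) (M : Ω → Matrix n n ℂ)
    (h : ∀ i j, Summable fun ω => (P ω : ℂ) * M ω i j) (i j : n) :
    expState P M i j = ∑' ω, (P ω : ℂ) * M ω i j := by
  rw [expState, matrix_tsum_apply (f := fun ω => P ω • M ω)
    (fun i j => ((h i j).congr fun ω => by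
      rw [Matrix.smul_apply, Complex.real_smul])) i j]
  exact tsum_congr fun ω => by rw [Matrix.smul_apply, Complex.real_smul]

lemma tsum_factor {Ω Ω' : Type*} (b : Ω → ℂ) (a : Ω' → ℂ) (P : Ω → ℝ) (Q : Ω' → ℝ)
    (hP : Summable P) (hQ : Summable Q) (hb : ∀ ω, ‖b ω‖ ≤ P ω) (ha : ∀ ω', ‖a ω'‖ ≤ Q ω') :
    ∑' p : Ω × Ω', b p.1 * a p.2 = (∑' ω, b ω) * (∑' ω', a ω') := by
  have hs : Summable fun p : Ω × Ω' => b p.1 * a p.2 := by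
    refine Summable.of_norm_bounded (g := fun p => P p.1 * Q p.2)
      (hP.mul_of_nonneg hQ (fun ω => le_trans (norm_nonneg _) (hb ω))
        (fun ω' => le_trans (norm_nonneg _) (ha ω'))) fun p => ?_
    rw [norm_mul]
    exact mul_le_mul (hb p.1) (ha p.2) (norm_nonneg _) (le_trans (norm_nonneg _) (hb p.1))
  rw [Summable.tsum_prod hs]
  calc ∑' ω, ∑' ω', b ω * a ω' = ∑' ω, b ω * ∑' ω', a ω' :=
        tsum_congr fun ω => tsum_mul_left
    _ = (∑' ω, b ω) * ∑' ω', a ω' := tsum_mul_right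

end summable

end Stmt5Aux

open Stmt5Aux

/-- **Lemma 4.** `d(F(Z) | {F} ⊗ ρ) = E_F[d(F(Z) | ρ)]`. The random function `F`
lives on its own discrete probability space `(Ω', Q)`, independent of `(Z, ρ)`. -/
theorem stmt_5 {Ω Ω' 𝒵 𝒮 d : Type*} [Countable Ω] [Countable Ω']
    [Fintype 𝒵] [DecidableEq 𝒵] [Fintype 𝒮] [DecidableEq 𝒮]
    [Fintype d] [DecidableEq d]
    (P : Ω → ℝ) (hP : ∀ ω, 0 ≤ P ω) (hP1 : ∑' ω, P ω = 1)
    (Q : Ω' → ℝ) (hQ : ∀ ω', 0 ≤ Q ω') (hQ1 : ∑' ω', Q ω' = 1)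
    (Z : Ω → 𝒵) (ρ : Ω → Matrix d d ℂ) (hρ : ∀ ω, IsDensityOp (ρ ω))
    (F : Ω' → 𝒵 → 𝒮) :
    nonUnif (fun p : Ω × Ω' => P p.1 * Q p.2)
        (fun p => F p.2 (Z p.1))
        (fun p => classicalState (F p.2) ⊗ₖ ρ p.1)
      = ∑' ω', Q ω' * nonUnif P (fun ω => F ω' (Z ω)) ρ := by
  classical
  have hPs : Summable P := summable_of_tsum_eq_one hP1
  have hQs : Summable Q := summable_of_tsum_eq_one hQ1
  have hPQs : Summable (fun p : Ω × Ω' => P p.1 * Q p.2) :=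
    hPs.mul_of_nonneg hQs (fun ω => hP ω) (fun ω' => hQ ω')
  have hPQ0 : ∀ p : Ω × Ω', 0 ≤ P p.1 * Q p.2 := fun p => mul_nonneg (hP _) (hQ _)
  -- entry bounds
  have hρE : ∀ (ω : Ω) (i j : d), ‖ρ ω i j‖ ≤ 1 := fun ω => entry_norm_le_one (hρ ω)
  have hM3 : ∀ (g : 𝒵 → 𝒮) (ω : Ω) (i j : (𝒵 → 𝒮) × d),
      ‖(classicalState g ⊗ₖ ρ ω) i j‖ ≤ 1 := fun g ω => kron_cs_entry_bound (hρE ω) g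
  have hM2 : ∀ (x : 𝒮) (ω : Ω) (i j : 𝒮 × d),
      ‖(classicalState x ⊗ₖ ρ ω) i j‖ ≤ 1 := fun x ω => kron_cs_entry_bound (hρE ω) x
  have hM1 : ∀ (x : 𝒮) (g : 𝒵 → 𝒮) (ω : Ω) (i j : 𝒮 × ((𝒵 → 𝒮) × d)),
      ‖(classicalState x ⊗ₖ (classicalState g ⊗ₖ ρ ω)) i j‖ ≤ 1 :=
    fun x g ω => kron_cs_entry_bound (hM3 g ω) x
  -- the weight of each fixed function g
  set q : (𝒵 → 𝒮) → ℝ := fun g => ∑' ω', if F ω' = g then Q ω' else 0 with hq_def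
  set σm : (𝒵 → 𝒮) → Matrix (𝒮 × d) (𝒮 × d) ℂ :=
    fun g => expState P (fun ω => classicalState (g (Z ω)) ⊗ₖ ρ ω) with hσm_def
  set ρbar : Matrix d d ℂ := expState P ρ with hρbar_def
  have hqs : ∀ g : 𝒵 → 𝒮, Summable fun ω' => if F ω' = g then Q ω' else 0 := by
    intro g
    refine Summable.of_nonneg_of_le (fun ω' => ?_) (fun ω' => ?_) hQs
    · split <;> simp [hQ ω']
    · split <;> simp [hQ ω']
  have hq0 : ∀ g, 0 ≤ q g := fun g => tsum_nonneg fun ω' => by split <;> simp [hQ ω']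
  have hqC : ∀ g : 𝒵 → 𝒮, ∑' ω', (if F ω' = g then (Q ω' : ℂ) else 0) = ((q g : ℝ) : ℂ) := by
    intro g
    rw [hq_def]
    dsimp only
    rw [Complex.ofReal_tsum]
    exact tsum_congr fun ω' => by split <;> simp
  -- σm entries
  have hσmE : ∀ (g : 𝒵 → 𝒮) (i j : 𝒮 × d),
      σm g i j = ∑' ω, (P ω : ℂ) * (classicalState (g (Z ω)) ⊗ₖ ρ ω) i j := by
    intro g i j
    rw [hσm_def]
    exact expState_apply _ _
      (fun i j => summable_mul_of_norm_le_one hPs hP (fun ω => hM2 (g (Z ω)) ω i j)) i j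
  have hρbarE : ∀ (i j : d), ρbar i j = ∑' ω, (P ω : ℂ) * ρ ω i j := by
    intro i j
    rw [hρbar_def]
    exact expState_apply _ _
      (fun i j => summable_mul_of_norm_le_one hPs hP (fun ω => hρE ω i j)) i j
  -- CLAIM A
  have claimA : expState (fun p : Ω × Ω' => P p.1 * Q p.2)
      (fun p => classicalState (F p.2 (Z p.1)) ⊗ₖ (classicalState (F p.2) ⊗ₖ ρ p.1))
      = ∑ g : 𝒵 → 𝒮, embedBlk g (q g • σm g) := by
    ext ⟨s, k, j⟩ ⟨s', k', j'⟩
    rw [expState_apply _ _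
      (fun i j => summable_mul_of_norm_le_one hPQs hPQ0
        (fun p => hM1 (F p.2 (Z p.1)) (F p.2) p.1 i j))]
    set aa : Ω' → ℂ := fun ω' => if F ω' = k ∧ k' = k then (Q ω' : ℂ) else 0 with haa_def
    set bb : Ω → ℂ :=
      fun ω => (P ω : ℂ) * ((classicalState (k (Z ω)) ⊗ₖ ρ ω) (s, j) (s', j')) with hbb_def
    have key : ∀ p : Ω × Ω',
        ((P p.1 * Q p.2 : ℝ) : ℂ) *
          (classicalState (F p.2 (Z p.1)) ⊗ₖ (classicalState (F p.2) ⊗ₖ ρ p.1))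
            (s, (k, j)) (s', (k', j')) = bb p.1 * aa p.2 := by
      rintro ⟨ω, ω'⟩
      rw [haa_def, hbb_def]
      dsimp only
      simp only [Matrix.kronecker_apply, classicalState, Matrix.single, Matrix.of_apply]
      by_cases h1 : F ω' = k
      · by_cases h2 : k' = k
        · subst h2; subst h1
          simp only [and_self, if_pos rfl, if_true]
          push_cast
          ring
        · have hnot : ¬(F ω' = k ∧ F ω' = k') := fun hh => h2 (hh.2.symm.trans hh.1)
          simp [hnot, h2]
      · have hnot : ¬(F ω' = k ∧ F ω' = k') := fun hh => h1 hh.1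
        simp [hnot, h1]
    have hbbN : ∀ ω, ‖bb ω‖ ≤ P ω := by
      intro ω
      rw [hbb_def]
      dsimp only
      rw [norm_mul, Complex.norm_real, Real.norm_eq_abs, abs_of_nonneg (hP ω)]
      calc P ω * ‖_‖ ≤ P ω * 1 := mul_le_mul_of_nonneg_left (hM2 (k (Z ω)) ω (s, j) (s', j')) (hP ω)
        _ = P ω := mul_one _
    have haaN : ∀ ω', ‖aa ω'‖ ≤ Q ω' := by
      intro ω'
      rw [haa_def]
      dsimp only
      split
      · rw [Complex.norm_real, Real.norm_eq_abs, abs_of_nonneg (hQ ω')]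
      · simp [hQ ω']
    rw [tsum_congr key, tsum_factor bb aa P Q hPs hQs hbbN haaN]
    have hbbT : ∑' ω, bb ω = σm k (s, j) (s', j') := (hσmE k (s, j) (s', j')).symm
    have haaT : ∑' ω', aa ω' = if k' = k then ((q k : ℝ) : ℂ) else 0 := by
      by_cases h2 : k' = k
      · rw [if_pos h2, ← hqC k]
        exact tsum_congr fun ω' => by rw [haa_def]; dsimp only; simp [h2]
      · rw [if_neg h2]
        have : aa = fun _ => 0 := by
          funext ω'; rw [haa_def]; dsimp only; simp [h2]
        rw [this, tsum_zero]
    rw [hbbT, haaT, Matrix.sum_apply]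
    simp only [embedBlk_apply, Matrix.smul_apply]
    by_cases h2 : k' = k
    · rw [if_pos h2]
      rw [Finset.sum_eq_single k]
      · rw [if_pos ⟨rfl, h2⟩, Complex.real_smul]
        ring
      · intro g _ hg
        rw [if_neg (fun hh => hg hh.1.symm)]
      · intro h; exact absurd (Finset.mem_univ _) h
    · rw [if_neg h2, mul_zero]
      symm
      refine Finset.sum_eq_zero fun g _ => ?_
      rw [if_neg (fun hh => h2 (hh.2.trans hh.1.symm))]
  -- CLAIM B
  have claimB : uniformState 𝒮 ⊗ₖ expState (fun p : Ω × Ω' => P p.1 * Q p.2)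
      (fun p => classicalState (F p.2) ⊗ₖ ρ p.1)
      = ∑ g : 𝒵 → 𝒮, embedBlk g (q g • (uniformState 𝒮 ⊗ₖ ρbar)) := by
    ext ⟨s, k, j⟩ ⟨s', k', j'⟩
    rw [Matrix.kronecker_apply]
    rw [expState_apply _ _
      (fun i j => summable_mul_of_norm_le_one hPQs hPQ0
        (fun p => hM3 (F p.2) p.1 i j))]
    set aa : Ω' → ℂ := fun ω' => if F ω' = k ∧ k' = k then (Q ω' : ℂ) else 0 with haa_def
    set bb : Ω → ℂ := fun ω => (P ω : ℂ) * ρ ω j j' with hbb_def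
    have key : ∀ p : Ω × Ω',
        ((P p.1 * Q p.2 : ℝ) : ℂ) *
          (classicalState (F p.2) ⊗ₖ ρ p.1) (k, j) (k', j') = bb p.1 * aa p.2 := by
      rintro ⟨ω, ω'⟩
      rw [haa_def, hbb_def]
      dsimp only
      simp only [Matrix.kronecker_apply, classicalState, Matrix.single, Matrix.of_apply]
      by_cases h1 : F ω' = k
      · by_cases h2 : k' = k
        · subst h2; subst h1
          simp only [and_self, if_pos rfl, if_true]
          push_cast
          ring
        · have hnot : ¬(F ω' = k ∧ F ω' = k') := fun hh => h2 (hh.2.symm.trans hh.1)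
          simp [hnot, h2]
      · have hnot : ¬(F ω' = k ∧ F ω' = k') := fun hh => h1 hh.1
        simp [hnot, h1]
    have hbbN : ∀ ω, ‖bb ω‖ ≤ P ω := by
      intro ω
      rw [hbb_def]
      dsimp only
      rw [norm_mul, Complex.norm_real, Real.norm_eq_abs, abs_of_nonneg (hP ω)]
      calc P ω * ‖_‖ ≤ P ω * 1 := mul_le_mul_of_nonneg_left (hρE ω j j') (hP ω)
        _ = P ω := mul_one _
    have haaN : ∀ ω', ‖aa ω'‖ ≤ Q ω' := by
      intro ω'
      rw [haa_def]
      dsimp only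
      split
      · rw [Complex.norm_real, Real.norm_eq_abs, abs_of_nonneg (hQ ω')]
      · simp [hQ ω']
    rw [tsum_congr key, tsum_factor bb aa P Q hPs hQs hbbN haaN]
    have hbbT : ∑' ω, bb ω = ρbar j j' := (hρbarE j j').symm
    have haaT : ∑' ω', aa ω' = if k' = k then ((q k : ℝ) : ℂ) else 0 := by
      by_cases h2 : k' = k
      · rw [if_pos h2, ← hqC k]
        exact tsum_congr fun ω' => by rw [haa_def]; dsimp only; simp [h2]
      · rw [if_neg h2]
        have : aa = fun _ => 0 := by
          funext ω'; rw [haa_def]; dsimp only; simp [h2]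
        rw [this, tsum_zero]
    rw [hbbT, haaT, Matrix.sum_apply]
    simp only [embedBlk_apply, Matrix.smul_apply, Matrix.kronecker_apply]
    by_cases h2 : k' = k
    · rw [if_pos h2]
      rw [Finset.sum_eq_single k]
      · rw [if_pos ⟨rfl, h2⟩, Complex.real_smul]
        ring
      · intro g _ hg
        rw [if_neg (fun hh => hg hh.1.symm)]
      · intro h; exact absurd (Finset.mem_univ _) h
    · rw [if_neg h2, mul_zero, mul_zero]
      symm
      refine Finset.sum_eq_zero fun g _ => ?_
      rw [if_neg (fun hh => h2 (hh.2.trans hh.1.symm))]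
  -- assemble LHS
  have hL : nonUnif (fun p : Ω × Ω' => P p.1 * Q p.2)
      (fun p => F p.2 (Z p.1)) (fun p => classicalState (F p.2) ⊗ₖ ρ p.1)
      = ∑ g : 𝒵 → 𝒮, q g * nonUnif P (fun ω => g (Z ω)) ρ := by
    unfold nonUnif traceDist
    rw [claimA, claimB, ← Finset.sum_sub_distrib]
    have hcomb : ∀ g : 𝒵 → 𝒮,
        embedBlk g (q g • σm g) - embedBlk g (q g • (uniformState 𝒮 ⊗ₖ ρbar))
          = embedBlk g (q g • (σm g - uniformState 𝒮 ⊗ₖ ρbar)) := by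
      intro g
      rw [smul_sub, embedBlk_sub]
    rw [Finset.sum_congr rfl fun g _ => hcomb g, matAbs_blockSum, Matrix.trace_sum]
    have hterm : ∀ g : 𝒵 → 𝒮,
        (embedBlk g (matAbs (q g • (σm g - uniformState 𝒮 ⊗ₖ ρbar)))).trace
          = ((q g : ℝ) : ℂ) * (matAbs (σm g - uniformState 𝒮 ⊗ₖ ρbar)).trace := by
      intro g
      rw [embedBlk_trace, matAbs_smul (hq0 g), Matrix.trace_smul, Complex.real_smul]
    rw [Finset.sum_congr rfl fun g _ => hterm g, Complex.re_sum, Finset.mul_sum]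
    refine Finset.sum_congr rfl fun g _ => ?_
    rw [show ((((q g : ℝ) : ℂ) * (matAbs (σm g - uniformState 𝒮 ⊗ₖ ρbar)).trace).re)
        = q g * (matAbs (σm g - uniformState 𝒮 ⊗ₖ ρbar)).trace.re by
      simp [Complex.mul_re]]
    simp only [hσm_def, hρbar_def]
    ring
  -- assemble RHS
  have hR : ∑' ω', Q ω' * nonUnif P (fun ω => F ω' (Z ω)) ρ
      = ∑ g : 𝒵 → 𝒮, q g * nonUnif P (fun ω => g (Z ω)) ρ := by
    have h1 : ∀ ω', Q ω' * nonUnif P (fun ω => F ω' (Z ω)) ρ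
        = ∑ g : 𝒵 → 𝒮, (if F ω' = g then Q ω' else 0) * nonUnif P (fun ω => g (Z ω)) ρ := by
      intro ω'
      rw [Finset.sum_eq_single (F ω')]
      · rw [if_pos rfl]
      · intro g _ hg
        rw [if_neg (fun hh => hg hh.symm), zero_mul]
      · intro h; exact absurd (Finset.mem_univ _) h
    rw [tsum_congr h1, Summable.tsum_finsetSum fun g _ => (hqs g).mul_right _]
    exact Finset.sum_congr rfl fun g _ => (hqs g).tsum_mul_right _
  rw [hL, hR]


end
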